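/- (Freeness of the ℤ/5ℤ-action on the quintic.) Let ξ ∈ ℂ be a primitive 5th root of unity, c_0,…,c_7 ∈ ℂ arbitrary, and let f_c = u_1^5 + u_2^5 + u_3^5 + u_4^5 + c_0 u_1^3 u_3 u_4 + c_1 u_1 u_2^3 u_3 + c_2 u_2 u_3^3 u_4 + c_3 u_1 u_2 u_4^3 + c_4 u_1^2 u_2^2 u_4 + c_5 u_1^2 u_2 u_3^2 + c_6 u_2^2 u_3 u_4^2 + c_7 u_1 u_3^2 u_4^2. If u = (u_1,u_2,u_3,u_4) ∈ ℂ^4 satisfies f_c(u) = 0, and for some k ∈ {1,2,3,4} and some λ ∈ ℂ one has ξ^{ik} u_i = λ u_i for all i = 1,2,3,4, then u = 0. In other words, no nontrivial power of β has a fixed point on the quintic surface Q_5 = V(f_c) ⊂ P^3, so the ℤ/5ℤ-action on Q_5 is free. -/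
import Mathlib


open MvPolynomial

noncomputable section

/- Variables `u₁, u₂, u₃, u₄` are `X 0, X 1, X 2, X 3` in `MvPolynomial (Fin 4) ℂ`. -/

/-- The `ℤ/5ℤ`-invariant family of quintic forms (equation (3) of the paper). -/
def fQuintic (c : Fin 8 → ℂ) : MvPolynomial (Fin 4) ℂ :=
  X 0^5 + X 1^5 + X 2^5 + X 3^5 +
    C (c 0) * X 0^3 * X 2 * X 3 +
    C (c 1) * X 0 * X 1^3 * X 2 +
    C (c 2) * X 1 * X 2^3 * X 3 +
    C (c 3) * X 0 * X 1 * X 3^3 +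
    C (c 4) * X 0^2 * X 1^2 * X 3 +
    C (c 5) * X 0^2 * X 1 * X 2^2 +
    C (c 6) * X 1^2 * X 2 * X 3^2 +
    C (c 7) * X 0 * X 2^2 * X 3^2

/-- Freeness of the `ℤ/5ℤ`-action on the quintic: if `ξ` is a primitive 5th
root of unity, `u ∈ ℂ⁴` satisfies `f_c(u) = 0`, and for some `1 ≤ k ≤ 4` and
`λ ∈ ℂ` one has `ξ^{ik} uᵢ = λ uᵢ` for all `i`, then `u = 0`: no nontrivial
power of `β` has a fixed point on `Q₅ = V(f_c) ⊂ ℙ³`. -/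
theorem stmt12 (ξ : ℂ) (hξ : IsPrimitiveRoot ξ 5) (c : Fin 8 → ℂ) (u : Fin 4 → ℂ)
    (hu : eval u (fQuintic c) = 0)
    (k : ℕ) (hk1 : 1 ≤ k) (hk4 : k ≤ 4) (lam : ℂ)
    (hfix : ∀ i : Fin 4, ξ^(((i : ℕ) + 1) * k) * u i = lam * u i) :
    u = 0 := by
  funext i
  show u i = 0
  by_contra hi
  have hz : ∀ j : Fin 4, j ≠ i → u j = 0 := by
    intro j hj
    by_contra hj0
    have e1 : ξ ^ (((i : ℕ) + 1) * k) = lam := mul_right_cancel₀ hi (hfix i)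
    have e2 : ξ ^ (((j : ℕ) + 1) * k) = lam := mul_right_cancel₀ hj0 (hfix j)
    have h5 : ξ ^ 5 = 1 := hξ.pow_eq_one
    have heq : ξ ^ ((((j : ℕ) + 1) * k) % 5) = ξ ^ ((((i : ℕ) + 1) * k) % 5) := by
      rw [← pow_eq_pow_mod _ h5, ← pow_eq_pow_mod _ h5, e1, e2]
    have hmod := hξ.pow_inj (Nat.mod_lt _ (by norm_num)) (Nat.mod_lt _ (by norm_num)) heq
    interval_cases k <;> fin_cases i <;> fin_cases j <;> simp_all
  fin_cases i <;>
    simp only [Fin.isValue, fQuintic, map_add, map_mul, map_pow, eval_X, eval_C] at hu hi hz ⊢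
  · rw [hz 1 (by decide), hz 2 (by decide), hz 3 (by decide)] at hu
    have h : u 0 ^ 5 = 0 := by linear_combination hu
    exact hi (pow_eq_zero_iff (n := 5) (by norm_num) |>.mp h)
  · rw [hz 0 (by decide), hz 2 (by decide), hz 3 (by decide)] at hu
    have h : u 1 ^ 5 = 0 := by linear_combination hu
    exact hi (pow_eq_zero_iff (n := 5) (by norm_num) |>.mp h)
  · rw [hz 0 (by decide), hz 1 (by decide), hz 3 (by decide)] at hu
    have h : u 2 ^ 5 = 0 := by linear_combination hu
    exact hi (pow_eq_zero_iff (n := 5) (by norm_num) |>.mp h)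
  · rw [hz 0 (by decide), hz 1 (by decide), hz 2 (by decide)] at hu
    have h : u 3 ^ 5 = 0 := by linear_combination hu
    exact hi (pow_eq_zero_iff (n := 5) (by norm_num) |>.mp h)

end
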